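/- For every μ ∈ ℝ^d, setting Σ̂_1 = S_1 + (X̄ − μ)(X̄ − μ)ᵀ and Σ̂_2 = S_2 + (Ȳ − μ)(Ȳ − μ)ᵀ, one has N_1 log(1 + M_X(μ)) + N_2 log(1 + M_Y(μ)) ≥ N_1 (X̄ − μ)ᵀ Σ̂_1⁻¹ (X̄ − μ) + N_2 (Ȳ − μ)ᵀ Σ̂_2⁻¹ (Ȳ − μ). In particular, evaluated at the maximum likelihood estimator μ̂ under the null hypothesis (the minimizer of the left-hand side), this gives the inequality LR ≥ LM between the Likelihood Ratio and Lagrange Multiplier statistics for the Behrens–Fisher Problem. -/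

import Mathlib

open Matrix Real

lemma vecMulVec_mulVec' {d : ℕ} (v x : Fin d → ℝ) :
    vecMulVec v v *ᵥ x = (v ⬝ᵥ x) • v := by
  ext i
  simp [mulVec, dotProduct, vecMulVec_apply, Finset.mul_sum, mul_comm, mul_left_comm]

lemma vecMulVec_posSemidef' {d : ℕ} (v : Fin d → ℝ) : (vecMulVec v v).PosSemidef := by
  rw [posSemidef_iff_dotProduct_mulVec]
  constructor
  · ext i j
    simp [IsHermitian, vecMulVec_apply, mul_comm]
  · intro x
    rw [vecMulVec_mulVec', dotProduct_smul]
    simp only [star_trivial, smul_eq_mul]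
    have : x ⬝ᵥ v = v ⬝ᵥ x := dotProduct_comm _ _
    rw [this]
    exact mul_self_nonneg _

lemma key_term {d : ℕ} (S : Matrix (Fin d) (Fin d) ℝ) (hS : S.PosDef) (v : Fin d → ℝ) :
    Real.log (1 + v ⬝ᵥ (S⁻¹ *ᵥ v)) ≥ v ⬝ᵥ ((S + vecMulVec v v)⁻¹ *ᵥ v) := by
  set M : ℝ := v ⬝ᵥ (S⁻¹ *ᵥ v) with hM
  have hMnn : 0 ≤ M := hS.inv.posSemidef.dotProduct_mulVec_nonneg v
  have h1M : (0:ℝ) < 1 + M := by linarith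
  have hA : (S + vecMulVec v v).PosDef := hS.add_posSemidef (vecMulVec_posSemidef' v)
  have hSu : IsUnit S.det := isUnit_iff_ne_zero.mpr hS.det_pos.ne'
  have hAu : IsUnit (S + vecMulVec v v).det := isUnit_iff_ne_zero.mpr hA.det_pos.ne'
  -- Sherman–Morrison: (S + vvᵀ)⁻¹ v = (1+M)⁻¹ • S⁻¹ v
  have hkey : (S + vecMulVec v v)⁻¹ *ᵥ v = (1 + M)⁻¹ • (S⁻¹ *ᵥ v) := by
    have h1 : (S + vecMulVec v v) *ᵥ ((1 + M)⁻¹ • (S⁻¹ *ᵥ v)) = v := by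
      rw [mulVec_smul, add_mulVec, mulVec_mulVec, mul_nonsing_inv _ hSu, one_mulVec,
        vecMulVec_mulVec', ← hM]
      rw [smul_add, smul_smul]
      ext i
      simp only [Pi.add_apply, Pi.smul_apply, smul_eq_mul]
      field_simp
    calc (S + vecMulVec v v)⁻¹ *ᵥ v
        = (S + vecMulVec v v)⁻¹ *ᵥ ((S + vecMulVec v v) *ᵥ ((1 + M)⁻¹ • (S⁻¹ *ᵥ v))) := by
          rw [h1]
      _ = (1 + M)⁻¹ • (S⁻¹ *ᵥ v) := by
          rw [mulVec_mulVec, nonsing_inv_mul _ hAu, one_mulVec]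
  rw [hkey, dotProduct_smul, smul_eq_mul, ← hM]
  -- need: log (1 + M) ≥ (1+M)⁻¹ * M
  have hlog : Real.log ((1 + M)⁻¹) ≤ (1 + M)⁻¹ - 1 :=
    Real.log_le_sub_one_of_pos (by positivity)
  rw [Real.log_inv] at hlog
  have : (1 + M)⁻¹ * M = 1 - (1 + M)⁻¹ := by field_simp; ring
  rw [this]
  linarith

theorem stmt11 (d : ℕ) (hd : 1 ≤ d)
    (S₁ S₂ : Matrix (Fin d) (Fin d) ℝ) (hS₁ : S₁.PosDef) (hS₂ : S₂.PosDef)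
    (Xbar Ybar : Fin d → ℝ) (N₁ N₂ : ℝ) (hN₁ : 0 < N₁) (hN₂ : 0 < N₂)
    (Mx My : (Fin d → ℝ) → ℝ)
    (hMx : Mx = fun μ => (Xbar - μ) ⬝ᵥ (S₁⁻¹ *ᵥ (Xbar - μ)))
    (hMy : My = fun μ => (Ybar - μ) ⬝ᵥ (S₂⁻¹ *ᵥ (Ybar - μ))) :
    ∀ μ : Fin d → ℝ,
      N₁ * Real.log (1 + Mx μ) + N₂ * Real.log (1 + My μ) ≥
        N₁ * ((Xbar - μ) ⬝ᵥ ((S₁ + vecMulVec (Xbar - μ) (Xbar - μ))⁻¹ *ᵥ (Xbar - μ)))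
          + N₂ * ((Ybar - μ) ⬝ᵥ ((S₂ + vecMulVec (Ybar - μ) (Ybar - μ))⁻¹ *ᵥ (Ybar - μ))) := by
  intro μ
  subst hMx hMy
  have h1 := key_term S₁ hS₁ (Xbar - μ)
  have h2 := key_term S₂ hS₂ (Ybar - μ)
  have := mul_le_mul_of_nonneg_left h1 hN₁.le
  have := mul_le_mul_of_nonneg_left h2 hN₂.le
  simp only [ge_iff_le]
  exact add_le_add (mul_le_mul_of_nonneg_left h1 hN₁.le) (mul_le_mul_of_nonneg_left h2 hN₂.le)
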